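/- Let U ⊆ ℂ be open and connected, let f : ℂ → ℂ be analytic on U and not identically zero on U (i.e., there exists w ∈ U with f(w) ≠ 0), let K ⊆ ℂ be a compact set well contained in U, and let ε > 0. Then either there exists δ > 0 with |f(z)| ≥ δ for all z ∈ K, or there exist finitely many points z₁, …, zₙ ∈ U and a function g analytic on U such that f(z) = (z − z₁)(z − z₂)⋯(z − zₙ)·g(z) for all z ∈ U, there exists δ > 0 with |g(z)| ≥ δ for all z ∈ K, and dist(zᵢ, K) < ε for each i. -/

import Mathlib

open Complex Metric

private lemma analyticAt_dslope_aux {φ : ℂ → ℂ} {z₀ w : ℂ} (h : AnalyticAt ℂ φ w) :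
    AnalyticAt ℂ (dslope φ z₀) w := by
  by_cases hw : w = z₀
  · subst hw
    obtain ⟨p, hp⟩ := h
    exact (HasFPowerSeriesAt.has_fpower_series_dslope_fslope hp).analyticAt
  · have hev : (fun z => (z - z₀)⁻¹ * (φ z - φ z₀)) =ᶠ[nhds w] dslope φ z₀ := by
      filter_upwards [isOpen_compl_singleton.mem_nhds (by simpa using hw)] with z hz
      rw [dslope_of_ne _ hz, slope_def_field, div_eq_inv_mul]
    have : AnalyticAt ℂ (fun z => (z - z₀)⁻¹ * (φ z - φ z₀)) w := by
      exact (((analyticAt_id.sub analyticAt_const).inv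
        (sub_ne_zero.mpr hw)).mul (h.sub analyticAt_const))
    exact this.congr hev

private lemma zeros_finite_aux {U K : Set ℂ} {f : ℂ → ℂ}
    (hUc : IsPreconnected U) (hf : AnalyticOnNhd ℂ f U) (hne : ∃ w ∈ U, f w ≠ 0)
    (hK : IsCompact K) (hKU : K ⊆ U) : {z ∈ K | f z = 0}.Finite := by
  by_contra h
  rw [← Set.not_infinite, not_not] at h
  obtain ⟨x, hxK, hacc⟩ := h.exists_accPt_of_subset_isCompact hK (Set.sep_subset _ _)
  rw [accPt_iff_frequently] at hacc
  have hfreq : ∃ᶠ z in nhdsWithin x {x}ᶜ, f z = 0 := by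
    rw [frequently_nhdsWithin_iff]
    exact hacc.mono (fun y hy => ⟨hy.2.2, hy.1⟩)
  obtain ⟨w, hwU, hwf⟩ := hne
  exact hwf (hf.eqOn_zero_of_preconnected_of_frequently_eq_zero hUc (hKU hxK) hfreq hwU)

private lemma factor_aux {U K : Set ℂ} (hU : IsOpen U) (hUc : IsPreconnected U)
    (hK : IsCompact K) (hKU : K ⊆ U) :
    ∀ n : ℕ, ∀ f : ℂ → ℂ, AnalyticOnNhd ℂ f U → (∃ w ∈ U, f w ≠ 0) →
      ({z ∈ K | f z = 0}).ncard ≤ n →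
      ∃ (m : ℕ) (z : Fin m → ℂ) (g : ℂ → ℂ), (∀ i, z i ∈ K) ∧ AnalyticOnNhd ℂ g U ∧
        (∀ w ∈ U, f w = (∏ i, (w - z i)) * g w) ∧ ∀ w ∈ K, g w ≠ 0 := by
  intro n
  induction n with
  | zero =>
    intro f hf hne hcard
    have hfin := zeros_finite_aux hUc hf hne hK hKU
    have hempty : {z ∈ K | f z = 0} = ∅ := by
      rw [← Set.ncard_eq_zero hfin]; omega
    refine ⟨0, ![], f, fun i => i.elim0, hf, fun w _ => by simp, fun w hw hfw => ?_⟩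
    have : w ∈ ({z ∈ K | f z = 0} : Set ℂ) := ⟨hw, hfw⟩
    rw [hempty] at this; exact this
  | succ n ih =>
    intro f hf hne hcard
    by_cases hz : ∃ z₀ ∈ K, f z₀ = 0
    case neg =>
      refine ⟨0, ![], f, fun i => i.elim0, hf, fun w _ => by simp, fun w hw hfw => ?_⟩
      exact hz ⟨w, hw, hfw⟩
    obtain ⟨z₀, hz₀K, hz₀f⟩ := hz
    obtain ⟨p, hp⟩ := hf z₀ (hKU hz₀K)
    have hpne : p ≠ 0 := by
      intro hp0
      have hev : ∀ᶠ z in nhds z₀, f z = 0 := hp.locally_zero_iff.mpr hp0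
      obtain ⟨w, hwU, hwf⟩ := hne
      exact hwf (hf.eqOn_zero_of_preconnected_of_eventuallyEq_zero hUc (hKU hz₀K) hev hwU)
    have hgU' : ∀ j : ℕ, AnalyticOnNhd ℂ ((Function.swap dslope z₀)^[j] f) U := by
      intro j
      induction j with
      | zero => exact hf
      | succ j ihj =>
        rw [Function.iterate_succ']
        intro w hw
        exact analyticAt_dslope_aux (ihj w hw)
    set k := p.order with hk
    set g : ℂ → ℂ := (Function.swap dslope z₀)^[k] f with hg
    have hgz₀ : g z₀ ≠ 0 := hp.iterate_dslope_fslope_ne_zero hpne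
    have hgU : AnalyticOnNhd ℂ g U := hgU' k
    -- global factorization on U
    have hFan : AnalyticOnNhd ℂ (fun w => (w - z₀) ^ k * g w) U :=
      fun w hw => ((analyticAt_id.sub analyticAt_const).pow k).mul (hgU w hw)
    have hEq : Set.EqOn f (fun w => (w - z₀) ^ k * g w) U := by
      apply AnalyticOnNhd.eqOn_of_preconnected_of_frequently_eq hf hFan hUc (hKU hz₀K)
      apply Filter.Eventually.frequently
      apply Filter.Eventually.filter_mono nhdsWithin_le_nhds
      filter_upwards with z
      simpa [smul_eq_mul] using hp.eq_pow_order_mul_iterate_dslope z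
    -- zero set shrinks
    have hfin := zeros_finite_aux hUc hf hne hK hKU
    have hsub : {z ∈ K | g z = 0} ⊆ {z ∈ K | f z = 0} \ {z₀} := by
      rintro w ⟨hwK, hwg⟩
      refine ⟨⟨hwK, ?_⟩, ?_⟩
      · rw [hEq (hKU hwK)]; simp [hwg]
      · rintro rfl; exact hgz₀ hwg
    have hcard' : ({z ∈ K | g z = 0}).ncard ≤ n := by
      have h1 : ({z ∈ K | g z = 0}).ncard ≤ ({z ∈ K | f z = 0} \ {z₀}).ncard :=
        Set.ncard_le_ncard hsub hfin.diff
      have h2 : ({z ∈ K | f z = 0} \ {z₀}).ncard = ({z ∈ K | f z = 0}).ncard - 1 :=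
        Set.ncard_diff_singleton_of_mem (⟨hz₀K, hz₀f⟩ : z₀ ∈ {z ∈ K | f z = 0})
      have h3 : 1 ≤ ({z ∈ K | f z = 0}).ncard :=
        (Set.ncard_pos hfin).mpr ⟨z₀, hz₀K, hz₀f⟩
      omega
    obtain ⟨m, zs, g', hzs, hg'U, hfact, hg'ne⟩ :=
      ih g hgU ⟨z₀, hKU hz₀K, hgz₀⟩ hcard'
    refine ⟨k + m, Fin.append (fun _ => z₀) zs, g', ?_, hg'U, ?_, hg'ne⟩
    · intro i
      refine Fin.addCases (fun j => ?_) (fun j => ?_) i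
      · rw [Fin.append_left]; exact hz₀K
      · rw [Fin.append_right]; exact hzs j
    · intro w hw
      rw [hEq hw]
      show (w - z₀) ^ k * g w = _
      rw [hfact w hw, Fin.prod_univ_add]
      simp only [Fin.append_left, Fin.append_right, Finset.prod_const, Finset.card_univ,
        Fintype.card_fin]
      ring

theorem bridges_zero_factorization
    (U : Set ℂ) (hU : IsOpen U) (hUc : IsConnected U)
    (f : ℂ → ℂ) (hf : AnalyticOn ℂ f U) (hne : ∃ w ∈ U, f w ≠ 0)
    (K : Set ℂ) (hK : IsCompact K)
    (hKU : ∃ r > 0, {z : ℂ | Metric.infDist z K ≤ r} ⊆ U)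
    (ε : ℝ) (hε : 0 < ε) :
    (∃ δ > 0, ∀ z ∈ K, δ ≤ ‖f z‖) ∨
      ∃ (n : ℕ) (z : Fin n → ℂ) (g : ℂ → ℂ),
        (∀ i, z i ∈ U) ∧ AnalyticOn ℂ g U ∧
        (∀ w ∈ U, f w = (∏ i, (w - z i)) * g w) ∧
        (∃ δ > 0, ∀ w ∈ K, δ ≤ ‖g w‖) ∧
        (∀ i, Metric.infDist (z i) K < ε) := by
  obtain ⟨r, hr, hrsub⟩ := hKU
  have hKU' : K ⊆ U := fun z hz => hrsub (by
    simp only [Set.mem_setOf_eq, Metric.infDist_zero_of_mem hz]; exact hr.le)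
  have hf' : AnalyticOnNhd ℂ f U := (hU.analyticOn_iff_analyticOnNhd.mp hf)
  obtain ⟨m, zs, g, hzsK, hgU, hfact, hgne⟩ :=
    factor_aux hU hUc.isPreconnected hK hKU' ({z ∈ K | f z = 0}).ncard f hf' hne le_rfl
  right
  have hδ : ∃ δ > 0, ∀ w ∈ K, δ ≤ ‖g w‖ := by
    rcases K.eq_empty_or_nonempty with hKe | hKne
    · exact ⟨1, one_pos, fun w hw => by rw [hKe] at hw; exact absurd hw (Set.notMem_empty w)⟩
    · have hcont : ContinuousOn (fun w => ‖g w‖) K :=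
        continuous_norm.comp_continuousOn ((hgU.continuousOn).mono hKU')
      obtain ⟨x, hxK, hmin⟩ := hK.exists_isMinOn hKne hcont
      exact ⟨‖g x‖, by simpa using hgne x hxK,
        fun w hw => hmin hw⟩
  exact ⟨m, zs, g, fun i => hKU' (hzsK i), hgU.analyticOn, hfact, hδ,
    fun i => by rw [Metric.infDist_zero_of_mem (hzsK i)]; exact hε⟩
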